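/- Let R be a commutative ring, let A: 0 → A₃ → A₂ → A₁ → R be a complex of finite free R-modules with differentials d₃, d₂, d₁, and suppose A admits the structure of a differential graded commutative algebra extending the ring structure on R (so that in particular d₁(e)f + d₂(f)e = d₂(e·f) for e ∈ A₁, f ∈ A₂, where e·f ∈ A₃, and the product A₁ ⊗ A₂ → A₃ exists satisfying the Leibniz rule). Fix a direct sum decomposition A₃ = C ⊕ L with projection η : A₃ → L. Define δ₄ : C → A₂ as the restriction of d₃ to C, and define δ₃ : A₂ → Hom(A₁, L) ⊕ A₁ by δ₃(f) = (e ↦ η(e·f), d₂(f)). Then δ₃ ∘ δ₄ = 0. -/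
import Mathlib


/-!
STATEMENT 2.  `A : 0 → A₃ → A₂ → A₁ → R` is a complex of finite free modules with a DGA
structure.  We realize the decomposition `A₃ = C ⊕ L` as `A₃ := C × L`, with projection
`η = snd`.  The relevant pieces of the DGA structure are the product
`mul12 : A₁ ⊗ A₂ → A₃` and the product `mul11 : A₁ ⊗ A₁ → A₂`; the axioms used are the
complex condition `d₂ ∘ d₃ = 0` and the Leibniz rule for a product `e·g` with `e ∈ A₁`,
`g ∈ A₃` (which lands in `A₄ = 0`): `e·(d₃ g) = d₁(e) • g`, i.e.
`mul12 e (d₃ g) = d₁ e • g`.  With `δ₄ = d₃|_C` and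
`δ₃ f = (e ↦ η (e·f), d₂ f)`, the conclusion is `δ₃ ∘ δ₄ = 0`.
-/
theorem stmt2 {R : Type*} [CommRing R]
    (A₁ A₂ C L : Type*)
    [AddCommGroup A₁] [Module R A₁] [Module.Free R A₁] [Module.Finite R A₁]
    [AddCommGroup A₂] [Module R A₂] [Module.Free R A₂] [Module.Finite R A₂]
    [AddCommGroup C] [Module R C] [Module.Free R C] [Module.Finite R C]
    [AddCommGroup L] [Module R L] [Module.Free R L] [Module.Finite R L]
    (d₁ : A₁ →ₗ[R] R) (d₂ : A₂ →ₗ[R] A₁) (d₃ : C × L →ₗ[R] A₂)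
    (mul11 : A₁ →ₗ[R] A₁ →ₗ[R] A₂) (mul12 : A₁ →ₗ[R] A₂ →ₗ[R] C × L)
    -- complex conditions
    (hd21 : ∀ f : A₂, d₁ (d₂ f) = 0)
    (hd32 : ∀ g : C × L, d₂ (d₃ g) = 0)
    -- graded commutativity in degree 1
    (hcomm : ∀ e e' : A₁, mul11 e e' = - mul11 e' e)
    (hsq : ∀ e : A₁, mul11 e e = 0)
    -- Leibniz rule for products A₁ · A₁ and A₁ · A₂ and A₁ · A₃ (the latter landing in A₄ = 0)
    (hLeib11 : ∀ e e' : A₁, d₂ (mul11 e e') = d₁ e • e' - d₁ e' • e)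
    (hLeib12 : ∀ (e : A₁) (f : A₂),
      d₃ (mul12 e f) = d₁ e • f - mul11 e (d₂ f))
    (hLeib13 : ∀ (e : A₁) (g : C × L), mul12 e (d₃ g) = d₁ e • g) :
    -- the differentials of B
    ∀ c : C,
      (∀ e : A₁, ((mul12 e (d₃ (c, 0))).2 : L) = 0) ∧ d₂ (d₃ (c, 0)) = 0 := by
  intro c
  refine ⟨fun e => ?_, hd32 _⟩
  rw [hLeib13]
  simp
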